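/- Let μ be a locally bounded p-periodic signed Borel measure on ℝ, E ∈ ℝ, and let (u,v) be a solution of −u'' + uμ = Eu with |u(0)|² + |v(0)|² = 1. Then max{ ‖(u(−p), v(−p))‖, ‖(u(p), v(p))‖, ‖(u(2p), v(2p))‖ } ≥ 1/2, where ‖·‖ is the Euclidean norm on ℝ². -/

import Mathlib

open MeasureTheory Filter Set Real
open scoped ENNReal

/-- A locally finite signed Borel measure on `ℝ`, represented as a formal
difference `pos - neg` of two nonnegative Borel measures. -/
structure SM where
  pos : Measure ℝ
  neg : Measure ℝ

/-- Local finiteness of both parts (i.e. the signed measure has locally finite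
total variation). -/
def SM.LocFin (μ : SM) : Prop :=
  IsLocallyFiniteMeasure μ.pos ∧ IsLocallyFiniteMeasure μ.neg

/-- The total variation `|a - b|` of the formal difference of two measures,
using the lattice-theoretic subtraction of measures (Jordan decomposition). -/
noncomputable def tvSub (a b : Measure ℝ) : Measure ℝ := (a - b) + (b - a)

/-- The total variation measure `|μ|` of a signed measure. -/
noncomputable def SM.tv (μ : SM) : Measure ℝ := tvSub μ.pos μ.neg

/-- The total variation `|μ₁ - μ₂|` of the difference of two signed measures. -/
noncomputable def tvDiff (μ₁ μ₂ : SM) : Measure ℝ :=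
  tvSub (μ₁.pos + μ₂.neg) (μ₂.pos + μ₁.neg)

/-- `‖ν‖_loc = sup_x ν([x, x+1])`. -/
noncomputable def normLoc (ν : Measure ℝ) : ℝ≥0∞ := ⨆ x : ℝ, ν (Set.Icc x (x + 1))

/-- A measure is uniformly locally bounded if `sup_x ν([x,x+1]) < ∞`. -/
def UnifLocBounded (ν : Measure ℝ) : Prop := normLoc ν < ⊤

/-- `μ` is `p`-periodic: `μ(· + p) = μ`. -/
def SM.IsPeriodic (μ : SM) (p : ℝ) : Prop :=
  Measure.map (fun x => x + p) μ.pos = μ.pos ∧ Measure.map (fun x => x + p) μ.neg = μ.neg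

/-- `I_x = [min(x,0), max(x,0)]`. -/
def Ix (x : ℝ) : Set ℝ := Set.Icc (min x 0) (max x 0)

/-- The integral `∫_A f dμ` of `f` over `A` against the signed measure `μ`. -/
noncomputable def SM.integOn (μ : SM) (f : ℝ → ℝ) (A : Set ℝ) : ℝ :=
  (∫ t in A, f t ∂μ.pos) - (∫ t in A, f t ∂μ.neg)

/-- `∫_0^x f dμ := ∫_{[0,x]} f dμ` for `x ≥ 0` and `:= -∫_{(x,0)} f dμ` for `x < 0`. -/
noncomputable def intRight (μ : SM) (f : ℝ → ℝ) (x : ℝ) : ℝ :=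
  if 0 ≤ x then μ.integOn f (Set.Icc 0 x) else - μ.integOn f (Set.Ioo x 0)

/-- `(u, v)` is a solution of `-u'' + u μ = E u`: `u` is locally absolutely
continuous with `u(x) = u(0) + ∫_0^x v`, and
`v(x) = v(0) + ∫_0^x u dμ - E ∫_0^x u` (`v` is the right limit `u'(·+)`). -/
structure IsSolution (μ : SM) (E : ℝ) (u v : ℝ → ℝ) : Prop where
  locInt : LocallyIntegrable v volume
  u_eq : ∀ x : ℝ, u x = u 0 + ∫ t in (0:ℝ)..x, v t
  v_eq : ∀ x : ℝ, v x = v 0 + intRight μ u x - E * ∫ t in (0:ℝ)..x, u t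

/-- The total variation measure `|μ - E λ|`, `λ` Lebesgue measure. -/
noncomputable def tvWithE (μ : SM) (E : ℝ) : Measure ℝ :=
  tvSub (μ.pos + ENNReal.ofReal (-E) • volume) (μ.neg + ENNReal.ofReal E • volume)

/-- Membership in the Sobolev space `W¹₂(ℝ)` (continuous representative `u`
with derivative `d`): `u, d ∈ L²` and `u(x) = u(0) + ∫_0^x d`. -/
def IsW12 (u d : ℝ → ℝ) : Prop :=
  MemLp u 2 volume ∧ MemLp d 2 volume ∧ ∀ x : ℝ, u x = u 0 + ∫ t in (0:ℝ)..x, d t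

/-- Addition of signed measures. -/
noncomputable def SM.add (a b : SM) : SM := ⟨a.pos + b.pos, a.neg + b.neg⟩

/-- The translate `T_x μ = μ(· - x)`. -/
noncomputable def SM.translate (μ : SM) (x : ℝ) : SM :=
  ⟨Measure.map (fun y => y + x) μ.pos, Measure.map (fun y => y + x) μ.neg⟩

/-- The scaled measure `μ ∘ β`, `(μ ∘ β)(A) = μ(β A)`. -/
noncomputable def SM.scale (μ : SM) (β : ℝ) : SM :=
  ⟨Measure.map (fun y => y / β) μ.pos, Measure.map (fun y => y / β) μ.neg⟩

/-- `μ` is a Gordon measure. -/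
def IsGordon (μ : SM) : Prop :=
  μ.LocFin ∧ UnifLocBounded μ.tv ∧
  ∃ (μs : ℕ → SM) (p : ℕ → ℝ),
    (∀ m, 0 < p m) ∧ (∀ m, (μs m).LocFin) ∧ (∀ m, (μs m).IsPeriodic (p m)) ∧
    (∀ m, UnifLocBounded (μs m).tv) ∧
    (∃ M : ℝ≥0∞, M < ⊤ ∧ ∀ m, normLoc (μs m).tv ≤ M) ∧
    Filter.Tendsto p Filter.atTop Filter.atTop ∧
    ∀ C : ℝ, Filter.Tendsto
      (fun m => Real.exp (C * p m) * ((tvDiff μ (μs m)) (Set.Icc (-(p m)) (2 * p m))).toReal)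
      Filter.atTop (nhds 0)

-- ===== my development =====

/-- Clean (right-continuous) formulation of the solution property. -/
structure CSol (μ : SM) (E : ℝ) (u v : ℝ → ℝ) : Prop where
  locInt : LocallyIntegrable v volume
  u_eq : ∀ x : ℝ, u x = u 0 + ∫ t in (0:ℝ)..x, v t
  v_eq : ∀ ⦃y x : ℝ⦄, y ≤ x → v x = v y + μ.integOn u (Set.Ioc y x) - E * ∫ t in y..x, u t

lemma CSol.contU {μ : SM} {E : ℝ} {u v : ℝ → ℝ} (h : CSol μ E u v) : Continuous u := by
  have hc : Continuous fun x => u 0 + ∫ t in (0:ℝ)..x, v t :=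
    continuous_const.add
      (intervalIntegral.continuous_primitive (fun a b => (h.locInt.integrableOn_isCompact isCompact_uIcc).intervalIntegrable) 0)
  exact hc.congr fun x => (h.u_eq x).symm

lemma isSolution_contU {μ : SM} {E : ℝ} {u v : ℝ → ℝ} (h : IsSolution μ E u v) :
    Continuous u := by
  have hc : Continuous fun x => u 0 + ∫ t in (0:ℝ)..x, v t :=
    continuous_const.add
      (intervalIntegral.continuous_primitive (fun a b => (h.locInt.integrableOn_isCompact isCompact_uIcc).intervalIntegrable) 0)
  exact hc.congr fun x => (h.u_eq x).symm

lemma integOn_union {μ : SM} (hμ : μ.LocFin) {u : ℝ → ℝ} (hu : Continuous u)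
    {A B : Set ℝ} {a b : ℝ} (hd : Disjoint A B) (hmA : MeasurableSet A) (hmB : MeasurableSet B)
    (hA : A ⊆ Set.Icc a b) (hB : B ⊆ Set.Icc a b) :
    μ.integOn u (A ∪ B) = μ.integOn u A + μ.integOn u B := by
  haveI := hμ.1; haveI := hμ.2
  have h1 : ∀ (ρ : Measure ℝ) [IsLocallyFiniteMeasure ρ],
      (∫ t in A ∪ B, u t ∂ρ) = (∫ t in A, u t ∂ρ) + (∫ t in B, u t ∂ρ) := by
    intro ρ _
    exact setIntegral_union hd hmB ((hu.integrableOn_Icc).mono_set hA)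
      ((hu.integrableOn_Icc).mono_set hB)
  simp only [SM.integOn, h1 μ.pos, h1 μ.neg]; ring

lemma isSolution_to_cSol {μ : SM} {E : ℝ} {u v : ℝ → ℝ} (hμ : μ.LocFin)
    (h : IsSolution μ E u v) : CSol μ E u v := by
  have hu : Continuous u := isSolution_contU h
  refine ⟨h.locInt, h.u_eq, ?_⟩
  intro y x hyx
  have hvx := h.v_eq x
  have hvy := h.v_eq y
  have hE : E * ∫ t in (0:ℝ)..x, u t = E * (∫ t in (0:ℝ)..y, u t) + E * ∫ t in y..x, u t := by
    rw [← mul_add, intervalIntegral.integral_add_adjacent_intervals] <;>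
      exact (hu.intervalIntegrable _ _)
  rcases le_or_gt 0 y with h0y | h0y
  · have h0x : (0:ℝ) ≤ x := le_trans h0y hyx
    rw [intRight, if_pos h0x] at hvx
    rw [intRight, if_pos h0y] at hvy
    have hd : Disjoint (Set.Icc (0:ℝ) y) (Set.Ioc y x) :=
      Set.disjoint_left.mpr fun t h1 h2 => absurd h2.1 (not_lt.mpr h1.2)
    have hsplit : μ.integOn u (Set.Icc 0 x) =
        μ.integOn u (Set.Icc 0 y) + μ.integOn u (Set.Ioc y x) := by
      rw [← integOn_union hμ hu hd measurableSet_Icc measurableSet_Ioc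
        (a := 0) (b := x) (Set.Icc_subset_Icc le_rfl hyx)
        (Set.Ioc_subset_Icc_self.trans (Set.Icc_subset_Icc h0y le_rfl)),
        Set.Icc_union_Ioc_eq_Icc h0y hyx]
    rw [hvx, hvy, hsplit, hE]; ring
  · rcases le_or_gt 0 x with h0x | h0x
    · rw [intRight, if_pos h0x] at hvx
      rw [intRight, if_neg (not_le.mpr h0y)] at hvy
      have hd : Disjoint (Set.Ioo y (0:ℝ)) (Set.Icc 0 x) :=
        Set.disjoint_left.mpr fun t h1 h2 => absurd h2.1 (not_le.mpr h1.2)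
      have hsplit : μ.integOn u (Set.Ioc y x) =
          μ.integOn u (Set.Ioo y 0) + μ.integOn u (Set.Icc 0 x) := by
        rw [← integOn_union hμ hu hd measurableSet_Ioo measurableSet_Icc
          (a := y) (b := x) ?_ ?_, Set.Ioo_union_Icc_eq_Ioc h0y h0x]
        · intro t ht
          exact ⟨ht.1.le, ht.2.le.trans h0x⟩
        · exact Set.Icc_subset_Icc h0y.le le_rfl
      rw [hvx, hvy, hsplit, hE]; ring
    · rw [intRight, if_neg (not_le.mpr h0x)] at hvx
      rw [intRight, if_neg (not_le.mpr h0y)] at hvy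
      have hd : Disjoint (Set.Ioc y x) (Set.Ioo x (0:ℝ)) :=
        Set.disjoint_left.mpr fun t h1 h2 => absurd h2.1 (not_lt.mpr h1.2)
      have hsplit : μ.integOn u (Set.Ioo y 0) =
          μ.integOn u (Set.Ioc y x) + μ.integOn u (Set.Ioo x 0) := by
        rw [← integOn_union hμ hu hd measurableSet_Ioc measurableSet_Ioo
          (a := y) (b := 0) ?_ ?_, Set.Ioc_union_Ioo_eq_Ioo hyx h0x]
        · intro t ht
          exact ⟨ht.1.le, ht.2.trans h0x.le⟩
        · intro t ht
          exact ⟨hyx.trans ht.1.le, ht.2.le⟩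
      rw [hvx, hvy, hsplit, hE]; ring

lemma locInt_shift {v : ℝ → ℝ} (hv : LocallyIntegrable v volume) (c : ℝ) :
    LocallyIntegrable (fun x => v (x + c)) volume := by
  intro x₀
  refine ⟨Set.Icc (x₀ - 1) (x₀ + 1), Icc_mem_nhds (by linarith) (by linarith), ?_⟩
  have h1 : IntervalIntegrable v volume (x₀ - 1 + c) (x₀ + 1 + c) :=
    (hv.integrableOn_isCompact isCompact_uIcc).intervalIntegrable
  have h2 := h1.comp_add_right c
  have h3 : IntervalIntegrable (fun x => v (x + c)) volume (x₀ - 1) (x₀ + 1) := by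
    simpa using h2
  exact (intervalIntegrable_iff_integrableOn_Icc_of_le (by linarith)).mp h3

lemma integOn_shift {μ : SM} {u : ℝ → ℝ} (hu : Continuous u) {c : ℝ}
    (hm1 : Measure.map (fun x => x + c) μ.pos = μ.pos)
    (hm2 : Measure.map (fun x => x + c) μ.neg = μ.neg) (y x : ℝ) :
    μ.integOn (fun t => u (t + c)) (Set.Ioc y x) = μ.integOn u (Set.Ioc (y + c) (x + c)) := by
  have key : ∀ ρ : Measure ℝ, Measure.map (fun x => x + c) ρ = ρ →
      (∫ t in Set.Ioc y x, u (t + c) ∂ρ) = ∫ t in Set.Ioc (y + c) (x + c), u t ∂ρ := by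
    intro ρ hρ
    conv_rhs => rw [← hρ]
    rw [setIntegral_map measurableSet_Ioc (hu.aestronglyMeasurable)
      (measurable_add_const c).aemeasurable, Set.preimage_add_const_Ioc]
    norm_num
  simp only [SM.integOn, key μ.pos hm1, key μ.neg hm2]

lemma CSol.shift {μ : SM} {E : ℝ} {u v : ℝ → ℝ} (h : CSol μ E u v) {c : ℝ}
    (hm1 : Measure.map (fun x => x + c) μ.pos = μ.pos)
    (hm2 : Measure.map (fun x => x + c) μ.neg = μ.neg) :
    CSol μ E (fun x => u (x + c)) (fun x => v (x + c)) := by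
  have hu : Continuous u := h.contU
  refine ⟨locInt_shift h.locInt c, ?_, ?_⟩
  · intro x
    have h1 : (∫ t in (0:ℝ)..x, v (t + c)) = ∫ t in c..(x + c), v t := by
      simpa using intervalIntegral.integral_comp_add_right (a := (0:ℝ)) (b := x) v c
    rw [h1]
    have h2 := h.u_eq (x + c)
    have h3 := h.u_eq c
    have h4 : (∫ t in (0:ℝ)..(x+c), v t) = (∫ t in (0:ℝ)..c, v t) + ∫ t in c..(x+c), v t := by
      rw [intervalIntegral.integral_add_adjacent_intervals] <;>
        exact (h.locInt.integrableOn_isCompact isCompact_uIcc).intervalIntegrable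
    rw [h2, h4, show (0:ℝ) + c = c from zero_add c, h3]; ring
  · intro y x hyx
    have h1 := h.v_eq (by linarith : y + c ≤ x + c)
    have h2 : (∫ t in y..x, u (t + c)) = ∫ t in (y+c)..(x+c), u t :=
      intervalIntegral.integral_comp_add_right u c
    rw [integOn_shift hu hm1 hm2, h2]
    exact h1

lemma CSol.sub_smul {μ : SM} {E : ℝ} {u₁ v₁ u₂ v₂ : ℝ → ℝ} (hμ : μ.LocFin)
    (h1 : CSol μ E u₁ v₁) (h2 : CSol μ E u₂ v₂) (l : ℝ) :
    CSol μ E (fun x => u₁ x - l * u₂ x) (fun x => v₁ x - l * v₂ x) := by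
  haveI := hμ.1; haveI := hμ.2
  have hu1 : Continuous u₁ := h1.contU
  have hu2 : Continuous u₂ := h2.contU
  have hint : ∀ a b : ℝ, IntervalIntegrable v₁ volume a b ∧ IntervalIntegrable v₂ volume a b :=
    fun a b => ⟨(h1.locInt.integrableOn_isCompact isCompact_uIcc).intervalIntegrable,
      (h2.locInt.integrableOn_isCompact isCompact_uIcc).intervalIntegrable⟩
  refine ⟨?_, ?_, ?_⟩
  · exact h1.locInt.sub (h2.locInt.smul l)
  · intro x
    rw [intervalIntegral.integral_sub (hint 0 x).1 ((hint 0 x).2.const_mul l),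
      intervalIntegral.integral_const_mul, h1.u_eq x, h2.u_eq x]
    ring
  · intro y x hyx
    have e1 := h1.v_eq hyx
    have e2 := h2.v_eq hyx
    have hIoc : Set.Ioc y x ⊆ Set.Icc y x := Set.Ioc_subset_Icc_self
    have hOn : μ.integOn (fun t => u₁ t - l * u₂ t) (Set.Ioc y x)
        = μ.integOn u₁ (Set.Ioc y x) - l * μ.integOn u₂ (Set.Ioc y x) := by
      have key : ∀ ρ : Measure ℝ, IsLocallyFiniteMeasure ρ →
          (∫ t in Set.Ioc y x, (u₁ t - l * u₂ t) ∂ρ)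
            = (∫ t in Set.Ioc y x, u₁ t ∂ρ) - l * ∫ t in Set.Ioc y x, u₂ t ∂ρ := by
        intro ρ hρ
        rw [integral_sub (hu1.integrableOn_Icc.mono_set hIoc)
          ((hu2.integrableOn_Icc.mono_set hIoc).const_mul l), integral_const_mul]
      simp only [SM.integOn, key μ.pos hμ.1, key μ.neg hμ.2]; ring
    have hI : (∫ t in y..x, (u₁ t - l * u₂ t)) = (∫ t in y..x, u₁ t) - l * ∫ t in y..x, u₂ t := by
      rw [intervalIntegral.integral_sub (hu1.intervalIntegrable _ _)
        ((hu2.intervalIntegrable _ _).const_mul l), intervalIntegral.integral_const_mul]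
    rw [hOn, hI, e1, e2]; ring

lemma abs_setIntegral_le {ρ : Measure ℝ} [IsLocallyFiniteMeasure ρ] {u : ℝ → ℝ}
    (hu : Continuous u) {a b s t : ℝ} (hs : a ≤ s) (hst : s ≤ t) (htb : t ≤ b) :
    |∫ r in Set.Ioc s t, u r ∂ρ| ≤ ∫ r in Set.Ioc a b, |u r| ∂ρ := by
  have h1 : |∫ r in Set.Ioc s t, u r ∂ρ| ≤ ∫ r in Set.Ioc s t, |u r| ∂ρ := by
    simpa [Real.norm_eq_abs] using
      norm_integral_le_integral_norm (μ := ρ.restrict (Set.Ioc s t)) u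
  refine h1.trans ?_
  refine setIntegral_mono_set (hu.abs.integrableOn_Icc.mono_set Set.Ioc_subset_Icc_self)
    ?_ (HasSubset.Subset.eventuallyLE (Set.Ioc_subset_Ioc hs htb))
  exact Filter.Eventually.of_forall fun r => abs_nonneg _

lemma CSol.vBound {μ : SM} {E : ℝ} {u v : ℝ → ℝ} (hμ : μ.LocFin) (h : CSol μ E u v)
    (a b : ℝ) : ∃ C : ℝ, ∀ s ∈ Set.Icc a b, |v s| ≤ C := by
  haveI := hμ.1; haveI := hμ.2
  have hu : Continuous u := h.contU
  refine ⟨|v a| + ((∫ r in Set.Ioc a b, |u r| ∂μ.pos) + (∫ r in Set.Ioc a b, |u r| ∂μ.neg))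
    + |E| * ∫ r in Set.Ioc a b, |u r|, fun s hs => ?_⟩
  have hveq := h.v_eq hs.1
  have h2 : |μ.integOn u (Set.Ioc a s)| ≤
      (∫ r in Set.Ioc a b, |u r| ∂μ.pos) + (∫ r in Set.Ioc a b, |u r| ∂μ.neg) := by
    refine (abs_sub _ _).trans (add_le_add ?_ ?_) <;>
      exact abs_setIntegral_le hu le_rfl hs.1 hs.2
  have h3 : |∫ t in a..s, u t| ≤ ∫ r in Set.Ioc a b, |u r| := by
    rw [intervalIntegral.integral_of_le hs.1]
    exact abs_setIntegral_le hu le_rfl hs.1 hs.2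
  calc |v s| = |v a + μ.integOn u (Set.Ioc a s) - E * ∫ t in a..s, u t| := by rw [← hveq]
  _ ≤ |v a| + |μ.integOn u (Set.Ioc a s)| + |E * ∫ t in a..s, u t| := by
      exact (abs_sub _ _).trans (add_le_add (abs_add_le _ _) le_rfl)
  _ ≤ _ := by
      rw [abs_mul]
      exact add_le_add (add_le_add le_rfl h2) (mul_le_mul_of_nonneg_left h3 (abs_nonneg E))

/-- the primitive `s ↦ ∫_{(0,s]} g dρ` is measurable and bounded on `[0,x]`. -/
lemma prim_meas {ρ : Measure ℝ} [IsLocallyFiniteMeasure ρ] {g : ℝ → ℝ} (hg : Continuous g) :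
    Measurable (fun s => ∫ t in Set.Ioc 0 s, g t ∂ρ) := by
  have hp : ∀ (f : ℝ → ℝ), Continuous f → (0 ≤ f) →
      Measurable (fun s => ∫ t in Set.Ioc 0 s, f t ∂ρ) := by
    intro f hf hf0
    refine Monotone.measurable (fun s₁ s₂ h12 => ?_)
    exact setIntegral_mono_set (hf.integrableOn_Icc.mono_set Set.Ioc_subset_Icc_self)
      (Filter.Eventually.of_forall fun r => hf0 r)
      (HasSubset.Subset.eventuallyLE (Set.Ioc_subset_Ioc le_rfl h12))
  have key : (fun s => ∫ t in Set.Ioc 0 s, g t ∂ρ)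
      = fun s => (∫ t in Set.Ioc 0 s, max (g t) 0 ∂ρ) - ∫ t in Set.Ioc 0 s, max (-g t) 0 ∂ρ := by
    funext s
    rw [← integral_sub]
    · congr 1; funext t
      rcases le_total (g t) 0 with h | h
      · simp [max_eq_left, max_eq_right h, neg_nonneg.mpr h]
      · simp [max_eq_left h, max_eq_right, neg_nonpos.mpr h]
    · exact ((hg.max continuous_const).integrableOn_Icc).mono_set Set.Ioc_subset_Icc_self
    · exact ((hg.neg.max continuous_const).integrableOn_Icc).mono_set Set.Ioc_subset_Icc_self
  rw [key]
  exact (hp _ (hg.max continuous_const) fun t => le_max_right _ _).sub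
    (hp _ (hg.neg.max continuous_const) fun t => le_max_right _ _)

lemma key_fubini {x : ℝ} (hx : 0 ≤ x) (ρ : Measure ℝ) [IsLocallyFiniteMeasure ρ]
    {v₁ u₂ : ℝ → ℝ} (hv₁ : LocallyIntegrable v₁ volume) (hu₂ : Continuous u₂) :
    (∫ s in Set.Ioo 0 x, v₁ s) * (∫ t in Set.Ioc 0 x, u₂ t ∂ρ)
      = (∫ t in Set.Ioc 0 x, (u₂ t * ∫ s in Set.Ioo 0 t, v₁ s) ∂ρ)
        + ∫ s in Set.Ioo 0 x, (v₁ s * ∫ t in Set.Ioc 0 s, u₂ t ∂ρ) := by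
  set σ : Measure ℝ := volume.restrict (Set.Ioo 0 x) with hσ
  set ρ' : Measure ℝ := ρ.restrict (Set.Ioc 0 x) with hρ'
  haveI : IsFiniteMeasure σ := by
    constructor
    rw [hσ, Measure.restrict_apply_univ]
    exact lt_of_le_of_lt (measure_mono Set.Ioo_subset_Icc_self) isCompact_Icc.measure_lt_top
  haveI : IsFiniteMeasure ρ' := by
    constructor
    rw [hρ', Measure.restrict_apply_univ]
    exact lt_of_le_of_lt (measure_mono Set.Ioc_subset_Icc_self) isCompact_Icc.measure_lt_top
  have hv : Integrable v₁ σ := hv₁.integrableOn_isCompact isCompact_Icc |>.mono_set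
    Set.Ioo_subset_Icc_self
  have hu : Integrable u₂ ρ' := hu₂.integrableOn_Icc.mono_set Set.Ioc_subset_Icc_self
  have hF : Integrable (fun z : ℝ × ℝ => v₁ z.1 * u₂ z.2) (σ.prod ρ') := hv.mul_prod hu
  set g : ℝ → ℝ → ℝ := fun s t => if s < t then v₁ s * u₂ t else 0 with hg
  set h : ℝ → ℝ → ℝ := fun s t => if t ≤ s then v₁ s * u₂ t else 0 with hh
  have hG : Integrable (Function.uncurry g) (σ.prod ρ') := by
    have : Function.uncurry g
        = Set.indicator {z : ℝ × ℝ | z.1 < z.2} (fun z => v₁ z.1 * u₂ z.2) := by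
      funext z
      simp only [Function.uncurry, hg, Set.indicator_apply, Set.mem_setOf_eq]
    rw [this]
    exact hF.indicator (measurableSet_lt measurable_fst measurable_snd)
  have hH : Integrable (Function.uncurry h) (σ.prod ρ') := by
    have : Function.uncurry h
        = Set.indicator {z : ℝ × ℝ | z.2 ≤ z.1} (fun z => v₁ z.1 * u₂ z.2) := by
      funext z
      simp only [Function.uncurry, hh, Set.indicator_apply, Set.mem_setOf_eq]
    rw [this]
    exact hF.indicator (measurableSet_le measurable_snd measurable_fst)
  have hG' : Integrable (fun z : ℝ × ℝ => g z.1 z.2) (σ.prod ρ') := hG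
  have hH' : Integrable (fun z : ℝ × ℝ => h z.1 z.2) (σ.prod ρ') := hH
  have hsum : ∀ z : ℝ × ℝ, v₁ z.1 * u₂ z.2 = g z.1 z.2 + h z.1 z.2 := by
    intro z
    simp only [hg, hh]
    rcases lt_or_ge z.1 z.2 with hc | hc
    · rw [if_pos hc, if_neg (not_le.mpr hc), add_zero]
    · rw [if_neg (not_lt.mpr hc), if_pos hc, zero_add]
  -- step 1 : A*B as a product integral
  have step1 : (∫ s, v₁ s ∂σ) * (∫ t, u₂ t ∂ρ')
      = ∫ z : ℝ × ℝ, v₁ z.1 * u₂ z.2 ∂(σ.prod ρ') := by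
    rw [← MeasureTheory.integral_prod_mul]
  have step2 : ∫ z : ℝ × ℝ, v₁ z.1 * u₂ z.2 ∂(σ.prod ρ')
      = (∫ z : ℝ × ℝ, g z.1 z.2 ∂(σ.prod ρ')) + ∫ z : ℝ × ℝ, h z.1 z.2 ∂(σ.prod ρ') := by
    rw [← integral_add hG' hH']
    exact integral_congr_ae (Filter.Eventually.of_forall hsum)
  -- the g-part
  have stepG : ∫ z : ℝ × ℝ, g z.1 z.2 ∂(σ.prod ρ')
      = ∫ t in Set.Ioc 0 x, (u₂ t * ∫ s in Set.Ioo 0 t, v₁ s) ∂ρ := by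
    rw [← MeasureTheory.integral_integral hG, MeasureTheory.integral_integral_swap hG]
    refine integral_congr_ae ?_
    filter_upwards [ae_restrict_mem measurableSet_Ioc] with t ht
    have e1 : (fun s => g s t) = Set.indicator (Set.Iio t) (fun s => v₁ s * u₂ t) := by
      funext s
      simp only [hg, Set.indicator_apply, Set.mem_Iio]
    rw [e1, integral_indicator measurableSet_Iio, hσ,
      Measure.restrict_restrict measurableSet_Iio]
    have e2 : Set.Iio t ∩ Set.Ioo 0 x = Set.Ioo 0 t := by
      ext r
      simp only [Set.mem_inter_iff, Set.mem_Iio, Set.mem_Ioo]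
      exact ⟨fun hr => ⟨hr.2.1, hr.1⟩, fun hr => ⟨hr.2, hr.1, lt_of_lt_of_le hr.2 ht.2⟩⟩
    rw [e2]
    rw [show (fun s => v₁ s * u₂ t) = fun s => u₂ t * v₁ s from funext fun s => mul_comm _ _,
      integral_const_mul]
  -- the h-part
  have stepH : ∫ z : ℝ × ℝ, h z.1 z.2 ∂(σ.prod ρ')
      = ∫ s in Set.Ioo 0 x, (v₁ s * ∫ t in Set.Ioc 0 s, u₂ t ∂ρ) := by
    rw [← MeasureTheory.integral_integral hH]
    refine integral_congr_ae ?_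
    filter_upwards [ae_restrict_mem measurableSet_Ioo] with s hs
    have e1 : (fun t => h s t) = Set.indicator (Set.Iic s) (fun t => v₁ s * u₂ t) := by
      funext t
      simp only [hh, Set.indicator_apply, Set.mem_Iic]
    rw [e1, integral_indicator measurableSet_Iic, hρ',
      Measure.restrict_restrict measurableSet_Iic]
    have e2 : Set.Iic s ∩ Set.Ioc 0 x = Set.Ioc 0 s := by
      ext r
      simp only [Set.mem_inter_iff, Set.mem_Iic, Set.mem_Ioc]
      exact ⟨fun hr => ⟨hr.2.1, hr.1⟩, fun hr => ⟨hr.2, hr.1, le_trans hr.2 hs.2.le⟩⟩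
    rw [e2, integral_const_mul]
  rw [hσ, hρ'] at step1
  rw [step1, step2, stepG, stepH]

lemma pairing {μ : SM} {E : ℝ} {u₁ v₁ u₂ v₂ : ℝ → ℝ} (hμ : μ.LocFin)
    (h1 : CSol μ E u₁ v₁) (h2 : CSol μ E u₂ v₂) {x : ℝ} (hx : 0 ≤ x) :
    u₁ x * v₂ x - u₁ 0 * v₂ 0
      = (μ.integOn (fun t => u₁ t * u₂ t) (Set.Ioc 0 x)
          - E * ∫ t in (0:ℝ)..x, u₁ t * u₂ t)
        + ∫ s in Set.Ioo 0 x, v₁ s * v₂ s := by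
  haveI := hμ.1; haveI := hμ.2
  have hu₁ : Continuous u₁ := h1.contU
  have hu₂ : Continuous u₂ := h2.contU
  set A₁ : ℝ := ∫ s in Set.Ioo 0 x, v₁ s with hA₁def
  have prim_eq : ∀ t : ℝ, 0 ≤ t → (∫ s in Set.Ioo 0 t, v₁ s) = u₁ t - u₁ 0 := by
    intro t ht
    rw [← MeasureTheory.integral_Ioc_eq_integral_Ioo, ← intervalIntegral.integral_of_le ht,
      h1.u_eq t]
    ring
  have hA1 : u₁ x = u₁ 0 + A₁ := by
    rw [hA₁def, prim_eq x hx]; ring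
  -- E1 for a general measure
  have E1 : ∀ ρ : Measure ℝ, IsLocallyFiniteMeasure ρ →
      A₁ * (∫ t in Set.Ioc 0 x, u₂ t ∂ρ)
        = ((∫ t in Set.Ioc 0 x, u₁ t * u₂ t ∂ρ) - u₁ 0 * ∫ t in Set.Ioc 0 x, u₂ t ∂ρ)
          + ∫ s in Set.Ioo 0 x, (v₁ s * ∫ t in Set.Ioc 0 s, u₂ t ∂ρ) := by
    intro ρ hρ
    rw [key_fubini hx ρ h1.locInt hu₂]
    congr 1
    have e1 : ∫ t in Set.Ioc 0 x, (u₂ t * ∫ s in Set.Ioo 0 t, v₁ s) ∂ρ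
        = ∫ t in Set.Ioc 0 x, (u₁ t * u₂ t - u₁ 0 * u₂ t) ∂ρ := by
      refine setIntegral_congr_fun measurableSet_Ioc (fun t ht => ?_)
      rw [prim_eq t ht.1.le]; ring
    rw [e1, integral_sub (f := fun t => u₁ t * u₂ t) ((hu₁.mul hu₂).integrableOn_Icc.mono_set Set.Ioc_subset_Icc_self)
      (((hu₂.integrableOn_Icc).mono_set Set.Ioc_subset_Icc_self).const_mul (u₁ 0)),
      integral_const_mul]
  -- integrability of the pieces on (0,x)
  set σ : Measure ℝ := volume.restrict (Set.Ioo 0 x) with hσdef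
  have hv1σ : Integrable v₁ σ :=
    (h1.locInt.integrableOn_isCompact isCompact_Icc).mono_set Set.Ioo_subset_Icc_self
  have hΦint : ∀ ρ : Measure ℝ, IsLocallyFiniteMeasure ρ →
      Integrable (fun s => v₁ s * ∫ t in Set.Ioc 0 s, u₂ t ∂ρ) σ := by
    intro ρ hρ
    have hb : ∀ᵐ s ∂σ, ‖∫ t in Set.Ioc 0 s, u₂ t ∂ρ‖ ≤ ∫ t in Set.Ioc 0 x, |u₂ t| ∂ρ := by
      filter_upwards [ae_restrict_mem measurableSet_Ioo] with s hs
      rw [Real.norm_eq_abs]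
      exact abs_setIntegral_le hu₂ le_rfl hs.1.le hs.2.le
    have := Integrable.bdd_mul (f := fun s => ∫ t in Set.Ioc 0 s, u₂ t ∂ρ) hv1σ
      ((prim_meas hu₂).aestronglyMeasurable) hb
    exact this.congr (Filter.Eventually.of_forall fun s => mul_comm _ _)
  have hv2b : ∃ C : ℝ, ∀ s ∈ Set.Icc (0:ℝ) x, |v₂ s| ≤ C := h2.vBound hμ 0 x
  have hv1v2 : Integrable (fun s => v₁ s * v₂ s) σ := by
    obtain ⟨C, hC⟩ := hv2b
    have hb : ∀ᵐ s ∂σ, ‖v₂ s‖ ≤ C := by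
      filter_upwards [ae_restrict_mem measurableSet_Ioo] with s hs
      exact hC s ⟨hs.1.le, hs.2.le⟩
    have := Integrable.bdd_mul (f := v₂) hv1σ (h2.locInt.aestronglyMeasurable.restrict) hb
    exact this.congr (Filter.Eventually.of_forall fun s => mul_comm _ _)
  -- E4 : combine the D-terms
  have hint1 : Integrable (fun s => v₁ s * (∫ t in Set.Ioc 0 s, u₂ t ∂μ.pos)
      - v₁ s * ∫ t in Set.Ioc 0 s, u₂ t ∂μ.neg) σ := (hΦint μ.pos hμ.1).sub (hΦint μ.neg hμ.2)
  have hint2 : Integrable (fun s => E * (v₁ s * ∫ t in Set.Ioc 0 s, u₂ t ∂volume)) σ :=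
    (hΦint volume inferInstance).const_mul E
  have E4 : (∫ s in Set.Ioo 0 x, (v₁ s * ∫ t in Set.Ioc 0 s, u₂ t ∂μ.pos))
        - (∫ s in Set.Ioo 0 x, (v₁ s * ∫ t in Set.Ioc 0 s, u₂ t ∂μ.neg))
        - E * (∫ s in Set.Ioo 0 x, (v₁ s * ∫ t in Set.Ioc 0 s, u₂ t ∂volume))
      = (∫ s in Set.Ioo 0 x, v₁ s * v₂ s) - v₂ 0 * A₁ := by
    have step1 : (∫ s in Set.Ioo 0 x, (v₁ s * ∫ t in Set.Ioc 0 s, u₂ t ∂μ.pos))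
        - (∫ s in Set.Ioo 0 x, (v₁ s * ∫ t in Set.Ioc 0 s, u₂ t ∂μ.neg))
        - E * (∫ s in Set.Ioo 0 x, (v₁ s * ∫ t in Set.Ioc 0 s, u₂ t ∂volume))
        = ∫ s in Set.Ioo 0 x, ((v₁ s * (∫ t in Set.Ioc 0 s, u₂ t ∂μ.pos)
            - v₁ s * (∫ t in Set.Ioc 0 s, u₂ t ∂μ.neg))
          - E * (v₁ s * ∫ t in Set.Ioc 0 s, u₂ t ∂volume)) := by
      rw [integral_sub hint1 hint2, integral_sub (hΦint μ.pos hμ.1) (hΦint μ.neg hμ.2),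
        integral_const_mul]
    have step2 : (∫ s in Set.Ioo 0 x, ((v₁ s * (∫ t in Set.Ioc 0 s, u₂ t ∂μ.pos)
            - v₁ s * (∫ t in Set.Ioc 0 s, u₂ t ∂μ.neg))
          - E * (v₁ s * ∫ t in Set.Ioc 0 s, u₂ t ∂volume)))
        = ∫ s in Set.Ioo 0 x, (v₁ s * v₂ s - v₂ 0 * v₁ s) := by
      refine setIntegral_congr_fun measurableSet_Ioo (fun s hs => ?_)
      have hv2s := h2.v_eq hs.1.le
      have hrw : v₂ s = v₂ 0 + ((∫ t in Set.Ioc 0 s, u₂ t ∂μ.pos)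
          - ∫ t in Set.Ioc 0 s, u₂ t ∂μ.neg) - E * ∫ t in Set.Ioc 0 s, u₂ t ∂volume := by
        rw [hv2s, SM.integOn, intervalIntegral.integral_of_le hs.1.le]
      rw [hrw]; ring
    have step3 : (∫ s in Set.Ioo 0 x, (v₁ s * v₂ s - v₂ 0 * v₁ s))
        = (∫ s in Set.Ioo 0 x, v₁ s * v₂ s) - v₂ 0 * A₁ := by
      rw [integral_sub hv1v2 (hv1σ.const_mul (v₂ 0)), integral_const_mul, hA₁def]
    rw [step1, step2, step3]
  -- final assembly
  have hv2x := h2.v_eq hx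
  rw [SM.integOn] at hv2x ⊢
  have hBvol : (∫ t in (0:ℝ)..x, u₂ t) = ∫ t in Set.Ioc 0 x, u₂ t ∂volume :=
    intervalIntegral.integral_of_le hx
  have hTvol : (∫ t in (0:ℝ)..x, u₁ t * u₂ t) = ∫ t in Set.Ioc 0 x, u₁ t * u₂ t ∂volume :=
    intervalIntegral.integral_of_le hx
  rw [hBvol] at hv2x
  rw [hTvol, hA1, hv2x]
  linear_combination (E1 μ.pos hμ.1) - (E1 μ.neg hμ.2) - E * (E1 volume inferInstance) + E4

lemma wronskian {μ : SM} {E : ℝ} {u₁ v₁ u₂ v₂ : ℝ → ℝ} (hμ : μ.LocFin)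
    (h1 : CSol μ E u₁ v₁) (h2 : CSol μ E u₂ v₂) {x : ℝ} (hx : 0 ≤ x) :
    u₁ x * v₂ x - u₂ x * v₁ x = u₁ 0 * v₂ 0 - u₂ 0 * v₁ 0 := by
  have p12 := pairing hμ h1 h2 hx
  have p21 := pairing hμ h2 h1 hx
  have e1 : (fun t => u₂ t * u₁ t) = fun t => u₁ t * u₂ t := funext fun t => mul_comm _ _
  have e2 : (fun s : ℝ => v₂ s * v₁ s) = fun s => v₁ s * v₂ s := funext fun s => mul_comm _ _
  rw [e1] at p21
  have e3 : (∫ s in Set.Ioo 0 x, v₂ s * v₁ s) = ∫ s in Set.Ioo 0 x, v₁ s * v₂ s := by rw [e2]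
  rw [e3] at p21
  linarith

lemma uniq_forward {μ : SM} {E : ℝ} {u v : ℝ → ℝ} (hμ : μ.LocFin) (h : CSol μ E u v)
    (hu0 : u 0 = 0) (hv0 : v 0 = 0) {T : ℝ} (hT : 0 ≤ T) : u T = 0 ∧ v T = 0 := by
  haveI := hμ.1; haveI := hμ.2
  have hu : Continuous u := h.contU
  set S : Set ℝ := {c | c ∈ Set.Icc 0 T ∧ ∀ y ∈ Set.Icc 0 c, u y = 0 ∧ v y = 0} with hSdef
  have hS0 : (0:ℝ) ∈ S := by
    refine ⟨⟨le_rfl, hT⟩, fun y hy => ?_⟩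
    have : y = 0 := le_antisymm hy.2 hy.1
    rw [this]; exact ⟨hu0, hv0⟩
  have hSne : S.Nonempty := ⟨0, hS0⟩
  have hSb : BddAbove S := ⟨T, fun c hc => hc.1.2⟩
  set c := sSup S with hcdef
  have hc0 : 0 ≤ c := le_csSup hSb hS0
  have hcT : c ≤ T := csSup_le hSne fun b hb => hb.1.2
  have hlt : ∀ y, 0 ≤ y → y < c → u y = 0 ∧ v y = 0 := by
    intro y h0y hyc
    obtain ⟨s, hsS, hys⟩ := exists_lt_of_lt_csSup hSne hyc
    exact hsS.2 y ⟨h0y, hys.le⟩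
  have huc : u c = 0 := by
    rw [h.u_eq c, hu0, intervalIntegral.integral_of_le hc0,
      MeasureTheory.integral_Ioc_eq_integral_Ioo]
    rw [setIntegral_congr_fun measurableSet_Ioo
      (g := fun _ => (0:ℝ)) (fun y hy => (hlt y hy.1.le hy.2).2)]
    simp
  have hvc : v c = 0 := by
    have hzero : ∀ y ∈ Set.Ioc (0:ℝ) c, u y = 0 := by
      intro y hy
      rcases lt_or_eq_of_le hy.2 with h' | h'
      · exact (hlt y hy.1.le h').1
      · rw [h']; exact huc
    have h2 : (∫ t in Set.Ioc 0 c, u t ∂μ.pos) = 0 := by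
      rw [setIntegral_congr_fun measurableSet_Ioc (g := fun _ => (0:ℝ)) hzero]; simp
    have h3 : (∫ t in Set.Ioc 0 c, u t ∂μ.neg) = 0 := by
      rw [setIntegral_congr_fun measurableSet_Ioc (g := fun _ => (0:ℝ)) hzero]; simp
    have hvol0 : (∫ t in (0:ℝ)..c, u t) = 0 := by
      rw [intervalIntegral.integral_of_le hc0,
        setIntegral_congr_fun measurableSet_Ioc (g := fun _ => (0:ℝ)) hzero]; simp
    have := h.v_eq hc0
    rw [hv0, SM.integOn, h2, h3, hvol0] at this
    simpa using this
  have hcS : c ∈ S := by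
    refine ⟨⟨hc0, hcT⟩, fun y hy => ?_⟩
    rcases lt_or_eq_of_le hy.2 with h' | h'
    · exact hlt y hy.1 h'
    · rw [h']; exact ⟨huc, hvc⟩
  have hmain : c = T := by
    by_contra hne
    have hcltT : c < T := lt_of_le_of_ne hcT hne
    -- choose δ
    have htend : Filter.Tendsto
        (fun n : ℕ => (μ.pos (Set.Ioc c (c + 1/(n+1)))).toReal
          + (μ.neg (Set.Ioc c (c + 1/(n+1)))).toReal) Filter.atTop (nhds 0) := by
      have hset : ∀ ρ : Measure ℝ, IsLocallyFiniteMeasure ρ →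
          Filter.Tendsto (fun n : ℕ => (ρ (Set.Ioc c (c + 1/(n+1)))).toReal)
            Filter.atTop (nhds 0) := by
        intro ρ hρ
        have hinter : (⋂ n : ℕ, Set.Ioc c (c + 1/(n+1))) = ∅ := by
          apply Set.eq_empty_iff_forall_notMem.mpr
          intro t ht
          simp only [Set.mem_iInter, Set.mem_Ioc] at ht
          obtain ⟨n, hn⟩ := exists_nat_one_div_lt (sub_pos.mpr (ht 0).1)
          have h2 := (ht n).2
          have h3 : (1:ℝ)/(n+1) < t - c := by exact_mod_cast hn
          linarith
        have hmono : Antitone (fun n : ℕ => Set.Ioc c (c + 1/(n+1))) := by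
          intro m n hmn
          apply Set.Ioc_subset_Ioc le_rfl
          have : (1:ℝ)/(n+1) ≤ 1/(m+1) := by
            apply one_div_le_one_div_of_le (by positivity)
            linarith [(Nat.cast_le (α := ℝ)).mpr hmn]
          linarith
        have hfin : ρ (Set.Ioc c (c + 1/((0:ℕ)+1))) ≠ ⊤ :=
          (lt_of_le_of_lt (measure_mono Set.Ioc_subset_Icc_self)
            (isCompact_Icc.measure_lt_top (μ := ρ))).ne
        have := tendsto_measure_iInter_atTop (μ := ρ)
          (s := fun n : ℕ => Set.Ioc c (c + 1/(n+1)))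
          (fun n => (measurableSet_Ioc).nullMeasurableSet) hmono ⟨0, by exact_mod_cast hfin⟩
        rw [hinter] at this
        simp only [measure_empty] at this
        simpa [Function.comp_def] using (ENNReal.tendsto_toReal ENNReal.zero_ne_top).comp this
      have := (hset μ.pos hμ.1).add (hset μ.neg hμ.2)
      simpa using this
    have hexN : ∃ n : ℕ, (μ.pos (Set.Ioc c (c + 1/(n+1)))).toReal
        + (μ.neg (Set.Ioc c (c + 1/(n+1)))).toReal < 1/4 := by
      have := htend.eventually (eventually_lt_nhds (by norm_num : (0:ℝ) < 1/4))
      exact this.exists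
    obtain ⟨N, hN⟩ := hexN
    set δ : ℝ := min (1/(N+1)) (min (T - c) (1/(4*(1+|E|)))) with hδdef
    have hδpos : 0 < δ := by
      apply lt_min (by positivity)
      apply lt_min (by linarith)
      positivity
    have hδ1 : δ ≤ 1/(N+1) := min_le_left _ _
    have hδ2 : δ ≤ T - c := le_trans (min_le_right _ _) (min_le_left _ _)
    have hδ3 : δ ≤ 1/(4*(1+|E|)) := le_trans (min_le_right _ _) (min_le_right _ _)
    -- bound on masses for Ioc c (c+δ)
    have hmass : ∀ ρ : Measure ℝ, IsLocallyFiniteMeasure ρ →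
        (ρ (Set.Ioc c (c + δ))).toReal ≤ (ρ (Set.Ioc c (c + 1/(N+1)))).toReal := by
      intro ρ hρ
      apply ENNReal.toReal_mono
      · exact (lt_of_le_of_lt (measure_mono Set.Ioc_subset_Icc_self)
          isCompact_Icc.measure_lt_top).ne
      · exact measure_mono (Set.Ioc_subset_Ioc le_rfl (by linarith))
    -- the sup
    set M : ℝ := sSup ((fun y => |u y| + |v y|) '' Set.Icc c (c + δ)) with hMdef
    have himne : ((fun y => |u y| + |v y|) '' Set.Icc c (c + δ)).Nonempty :=
      ⟨_, Set.mem_image_of_mem _ (Set.left_mem_Icc.mpr (by linarith))⟩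
    have himbdd : BddAbove ((fun y => |u y| + |v y|) '' Set.Icc c (c + δ)) := by
      obtain ⟨Cu, hCu⟩ := isCompact_Icc.exists_bound_of_continuousOn
        (f := u) hu.continuousOn
      obtain ⟨Cv, hCv⟩ := h.vBound hμ c (c + δ)
      refine ⟨Cu + Cv, fun z hz => ?_⟩
      obtain ⟨y, hy, rfl⟩ := hz
      exact add_le_add (by simpa [Real.norm_eq_abs] using hCu y hy) (hCv y hy)
    have hM0 : 0 ≤ M := by
      have h1 : |u c| + |v c| ≤ M :=
        le_csSup himbdd (Set.mem_image_of_mem _ (Set.left_mem_Icc.mpr (by linarith)))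
      rw [huc, hvc] at h1
      simpa using h1
    have hMle : ∀ y ∈ Set.Icc c (c + δ), |u y| + |v y| ≤ M :=
      fun y hy => le_csSup himbdd (Set.mem_image_of_mem _ hy)
    -- pointwise bounds
    have hbound : ∀ y ∈ Set.Icc c (c + δ), |u y| + |v y| ≤ M * (1/2) := by
      intro y hy
      have hcy : c ≤ y := hy.1
      -- u part
      have huy : u y = ∫ t in Set.Ioc c y, v t ∂volume := by
        have e1 := h.u_eq y
        have e2 := h.u_eq c
        have e3 : (∫ t in (0:ℝ)..y, v t) = (∫ t in (0:ℝ)..c, v t) + ∫ t in c..y, v t := by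
          rw [intervalIntegral.integral_add_adjacent_intervals] <;>
            exact (h.locInt.integrableOn_isCompact isCompact_uIcc).intervalIntegrable
        rw [e1, e3, ← intervalIntegral.integral_of_le hcy]
        have : u c = u 0 + ∫ t in (0:ℝ)..c, v t := e2
        rw [huc, hu0] at this
        linarith
      have hub : |u y| ≤ M * δ := by
        rw [huy]
        have := norm_setIntegral_le_of_norm_le_const (μ := volume) (s := Set.Ioc c y)
          (f := v) (C := M) (by simp [Real.volume_Ioc])
          ?_
        · rw [Real.norm_eq_abs, measureReal_def] at this
          refine this.trans ?_
          rw [Real.volume_Ioc, ENNReal.toReal_ofReal (by linarith)]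
          exact mul_le_mul_of_nonneg_left (by linarith [hy.2]) hM0
        · intro t ht
          rw [Real.norm_eq_abs]
          have : |u t| + |v t| ≤ M := hMle t ⟨ht.1.le, ht.2.trans hy.2⟩
          linarith [abs_nonneg (u t)]
      -- v part
      have hvyeq := h.v_eq hcy
      have hsetb : ∀ ρ : Measure ℝ, IsLocallyFiniteMeasure ρ →
          |∫ t in Set.Ioc c y, u t ∂ρ| ≤ M * (ρ (Set.Ioc c (c + δ))).toReal := by
        intro ρ hρ
        have h1 := norm_setIntegral_le_of_norm_le_const (μ := ρ) (s := Set.Ioc c y)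
          (f := u) (C := M) (lt_of_le_of_lt (measure_mono Set.Ioc_subset_Icc_self)
            isCompact_Icc.measure_lt_top) ?_
        · rw [Real.norm_eq_abs, measureReal_def] at h1
          refine h1.trans ?_
          refine mul_le_mul_of_nonneg_left ?_ hM0
          apply ENNReal.toReal_mono
          · exact (lt_of_le_of_lt (measure_mono Set.Ioc_subset_Icc_self)
              isCompact_Icc.measure_lt_top).ne
          · exact measure_mono (Set.Ioc_subset_Ioc le_rfl hy.2)
        · intro t ht
          rw [Real.norm_eq_abs]
          have : |u t| + |v t| ≤ M := hMle t ⟨ht.1.le, ht.2.trans hy.2⟩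
          linarith [abs_nonneg (v t)]
      have hvol : |∫ t in c..y, u t| ≤ M * δ := by
        rw [intervalIntegral.integral_of_le hcy]
        have h1 := norm_setIntegral_le_of_norm_le_const (μ := volume) (s := Set.Ioc c y)
          (f := u) (C := M) (by simp [Real.volume_Ioc])
          ?_
        · rw [Real.norm_eq_abs, measureReal_def] at h1
          refine h1.trans ?_
          rw [Real.volume_Ioc, ENNReal.toReal_ofReal (by linarith)]
          exact mul_le_mul_of_nonneg_left (by linarith [hy.2]) hM0
        · intro t ht
          rw [Real.norm_eq_abs]
          have : |u t| + |v t| ≤ M := hMle t ⟨ht.1.le, ht.2.trans hy.2⟩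
          linarith [abs_nonneg (v t)]
      have hvb : |v y| ≤ M * ((μ.pos (Set.Ioc c (c + δ))).toReal
          + (μ.neg (Set.Ioc c (c + δ))).toReal) + |E| * (M * δ) := by
        rw [hvyeq, hvc, SM.integOn]
        have habs : |(0:ℝ) + ((∫ t in Set.Ioc c y, u t ∂μ.pos) - ∫ t in Set.Ioc c y, u t ∂μ.neg)
            - E * ∫ t in c..y, u t|
            ≤ |∫ t in Set.Ioc c y, u t ∂μ.pos| + |∫ t in Set.Ioc c y, u t ∂μ.neg|
              + |E| * |∫ t in c..y, u t| := by
          rw [zero_add, ← abs_mul]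
          exact (abs_sub _ _).trans (add_le_add (abs_sub _ _) le_rfl)
        refine habs.trans ?_
        rw [mul_add]
        exact add_le_add (add_le_add (hsetb μ.pos hμ.1) (hsetb μ.neg hμ.2))
          (mul_le_mul_of_nonneg_left hvol (abs_nonneg E))
      -- combine
      have hmasses : (μ.pos (Set.Ioc c (c + δ))).toReal
          + (μ.neg (Set.Ioc c (c + δ))).toReal ≤ 1/4 :=
        le_trans (add_le_add (hmass μ.pos hμ.1) (hmass μ.neg hμ.2)) hN.le
      have hEδ : (1 + |E|) * δ ≤ 1/4 := by
        have h4 : (0:ℝ) < 1 + |E| := by positivity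
        calc (1 + |E|) * δ ≤ (1 + |E|) * (1/(4*(1+|E|))) :=
              mul_le_mul_of_nonneg_left hδ3 h4.le
        _ = 1/4 := by field_simp
      calc |u y| + |v y| ≤ M * δ + (M * ((μ.pos (Set.Ioc c (c + δ))).toReal
            + (μ.neg (Set.Ioc c (c + δ))).toReal) + |E| * (M * δ)) := add_le_add hub hvb
      _ = M * ((μ.pos (Set.Ioc c (c + δ))).toReal + (μ.neg (Set.Ioc c (c + δ))).toReal
            + (1 + |E|) * δ) := by ring
      _ ≤ M * (1/4 + 1/4) := by
          refine mul_le_mul_of_nonneg_left ?_ hM0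
          linarith
      _ = M * (1/2) := by norm_num
    have hMz : M = 0 := by
      have : M ≤ M * (1/2) := by
        refine csSup_le himne ?_
        rintro z ⟨y, hy, rfl⟩
        exact hbound y hy
      linarith
    have hallz : ∀ y ∈ Set.Icc c (c + δ), u y = 0 ∧ v y = 0 := by
      intro y hy
      have h1 := hMle y hy
      rw [hMz] at h1
      constructor <;> [skip; skip] <;>
        · have := abs_nonneg (u y); have := abs_nonneg (v y)
          rw [← abs_eq_zero]; linarith
    have hnewS : c + δ ∈ S := by
      refine ⟨⟨by linarith, by linarith⟩, fun y hy => ?_⟩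
      rcases le_or_gt y c with h' | h'
      · exact hcS.2 y ⟨hy.1, h'⟩
      · exact hallz y ⟨h'.le, hy.2⟩
    have : c + δ ≤ c := le_csSup hSb hnewS
    linarith
  exact hmain ▸ hcS.2 c ⟨hc0, le_rfl⟩

lemma nrm_eq (a b : ℝ) : Real.sqrt (a^2 + b^2) = ‖(⟨a, b⟩ : ℂ)‖ := by
  rw [Complex.norm_def, Complex.normSq_mk]
  congr 1
  ring

lemma nrm_smul (l a b : ℝ) (h : a^2 + b^2 = 1) :
    Real.sqrt ((l*a)^2 + (l*b)^2) = |l| := by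
  have e : (l*a)^2 + (l*b)^2 = l^2 * (a^2 + b^2) := by ring
  rw [e, h, mul_one, Real.sqrt_sq_eq_abs]

theorem periodic_three_point_estimate' (μ : SM) (hloc : μ.LocFin)
    (p : ℝ) (hp : 0 < p) (hper : μ.IsPeriodic p)
    (E : ℝ) (u v : ℝ → ℝ) (hs : IsSolution μ E u v)
    (hnorm : (u 0) ^ 2 + (v 0) ^ 2 = 1) :
    1 / 2 ≤ max (Real.sqrt ((u (-p)) ^ 2 + (v (-p)) ^ 2))
        (max (Real.sqrt ((u p) ^ 2 + (v p) ^ 2))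
          (Real.sqrt ((u (2 * p)) ^ 2 + (v (2 * p)) ^ 2))) := by
  have hq : CSol μ E u v := isSolution_to_cSol hloc hs
  have hm1' : Measure.map (fun x => x + -p) μ.pos = μ.pos := by
    calc Measure.map (fun x => x + -p) μ.pos
        = Measure.map (fun x => x + -p) (Measure.map (fun x => x + p) μ.pos) := by rw [hper.1]
    _ = Measure.map ((fun x => x + -p) ∘ (fun x => x + p)) μ.pos :=
        Measure.map_map (measurable_add_const _) (measurable_add_const _)
    _ = Measure.map id μ.pos := by congr 1; funext x; simp
    _ = μ.pos := Measure.map_id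
  have hm2' : Measure.map (fun x => x + -p) μ.neg = μ.neg := by
    calc Measure.map (fun x => x + -p) μ.neg
        = Measure.map (fun x => x + -p) (Measure.map (fun x => x + p) μ.neg) := by rw [hper.2]
    _ = Measure.map ((fun x => x + -p) ∘ (fun x => x + p)) μ.neg :=
        Measure.map_map (measurable_add_const _) (measurable_add_const _)
    _ = Measure.map id μ.neg := by congr 1; funext x; simp
    _ = μ.neg := Measure.map_id
  have hP : CSol μ E (fun x => u (x + p)) (fun x => v (x + p)) := hq.shift hper.1 hper.2
  have hMm : CSol μ E (fun x => u (x + -p)) (fun x => v (x + -p)) := hq.shift hm1' hm2'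
  -- the three Wronskian identities
  have F1 := wronskian hloc hMm hq hp.le
  have F2 := wronskian hloc hq hP hp.le
  have F3 := wronskian hloc hMm hP hp.le
  rw [show p + -p = (0:ℝ) from by ring, show (0:ℝ) + -p = -p from by ring] at F1 F3
  rw [show p + p = 2*p from by ring, show (0:ℝ) + p = p from by ring] at F2 F3
  -- F1 : u 0 * v 0 - u p * v (-p) = u (-p) * v 0 - u 0 * v (-p)
  by_cases hW : u 0 * v p - u p * v 0 = 0
  · -- degenerate case
    have hlam : ∃ l : ℝ, u p = l * u 0 ∧ v p = l * v 0 := by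
      by_cases h0 : u 0 = 0
      · have hv0 : v 0 ≠ 0 := by
          intro hv; rw [h0, hv] at hnorm; norm_num at hnorm
        have hup : u p = 0 := by
          rw [h0] at hW
          have : u p * v 0 = 0 := by linarith
          rcases mul_eq_zero.mp this with h' | h'
          · exact h'
          · exact absurd h' hv0
        exact ⟨v p / v 0, by rw [hup, h0]; ring, by field_simp⟩
      · refine ⟨u p / u 0, by field_simp, ?_⟩
        field_simp
        linarith
    obtain ⟨l, hl1, hl2⟩ := hlam
    have hF1z : u (-p) * v 0 - u 0 * v (-p) = 0 := by
      rw [← F1]; exact hW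
    have hkap : ∃ k : ℝ, u (-p) = k * u 0 ∧ v (-p) = k * v 0 := by
      by_cases h0 : u 0 = 0
      · have hv0 : v 0 ≠ 0 := by
          intro hv; rw [h0, hv] at hnorm; norm_num at hnorm
        have hup : u (-p) = 0 := by
          rw [h0] at hF1z
          have : u (-p) * v 0 = 0 := by linarith
          rcases mul_eq_zero.mp this with h' | h'
          · exact h'
          · exact absurd h' hv0
        exact ⟨v (-p) / v 0, by rw [hup, h0]; ring, by field_simp⟩
      · refine ⟨u (-p) / u 0, by field_simp, ?_⟩
        field_simp
        linarith
    obtain ⟨k, hk1, hk2⟩ := hkap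
    -- forward solutions
    have hsP : CSol μ E (fun x => u (x + p) - l * u x) (fun x => v (x + p) - l * v x) :=
      CSol.sub_smul hloc hP hq l
    have hsP0u : u (0 + p) - l * u 0 = 0 := by rw [zero_add, hl1]; ring
    have hsP0v : v (0 + p) - l * v 0 = 0 := by rw [zero_add, hl2]; ring
    obtain ⟨e1, e2⟩ := uniq_forward hloc hsP hsP0u hsP0v hp.le
    rw [show p + p = 2*p from by ring] at e1 e2
    have hsM : CSol μ E (fun x => u (x + -p) - k * u x) (fun x => v (x + -p) - k * v x) :=
      CSol.sub_smul hloc hMm hq k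
    have hsM0u : u (0 + -p) - k * u 0 = 0 := by rw [zero_add, hk1]; ring
    have hsM0v : v (0 + -p) - k * v 0 = 0 := by rw [zero_add, hk2]; ring
    obtain ⟨e3, e4⟩ := uniq_forward hloc hsM hsM0u hsM0v hp.le
    rw [show p + -p = (0:ℝ) from by ring] at e3 e4
    -- k * l = 1
    have hkl : k * l = 1 := by
      by_contra hkl
      have h1 : (1 - k * l) * u 0 = 0 := by linear_combination e3 + k * hl1
      have h2 : (1 - k * l) * v 0 = 0 := by linear_combination e4 + k * hl2
      have hne : (1 : ℝ) - k * l ≠ 0 := fun hcc => hkl (by linarith)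
      have hu00 : u 0 = 0 := by
        rcases mul_eq_zero.mp h1 with h' | h'
        · exact absurd h' hne
        · exact h'
      have hv00 : v 0 = 0 := by
        rcases mul_eq_zero.mp h2 with h' | h'
        · exact absurd h' hne
        · exact h'
      rw [hu00, hv00] at hnorm; norm_num at hnorm
    have hB : Real.sqrt ((u p)^2 + (v p)^2) = |l| := by
      rw [hl1, hl2]; exact nrm_smul l _ _ hnorm
    have hA : Real.sqrt ((u (-p))^2 + (v (-p))^2) = |k| := by
      rw [hk1, hk2]; exact nrm_smul k _ _ hnorm
    rcases le_or_gt (1/2 : ℝ) |l| with hcase | hcase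
    · refine le_trans ?_ (le_trans (le_max_left _ (Real.sqrt ((u (2*p))^2 + (v (2*p))^2)))
        (le_max_right (Real.sqrt ((u (-p))^2 + (v (-p))^2)) _))
      rw [hB]; exact hcase
    · have hlne : l ≠ 0 := by
        intro h0; rw [h0, mul_zero] at hkl; norm_num at hkl
      have habs : |k| * |l| = 1 := by rw [← abs_mul, hkl]; norm_num
      have hk2' : (2:ℝ) ≤ |k| := by
        have hlpos : 0 < |l| := abs_pos.mpr hlne
        nlinarith
      refine le_trans ?_ (le_max_left _ _)
      rw [hA]; linarith
  · -- nondegenerate case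
    set β : ℝ := (u 0 * v (2*p) - u (2*p) * v 0) / (u 0 * v p - u p * v 0) with hβdef
    have e3 : β * (u 0 * v p - u p * v 0) = u 0 * v (2*p) - u (2*p) * v 0 :=
      div_mul_cancel₀ _ hW
    -- F2 : u 0 * v p - u p * v 0 = u p * v (2p) - u (2p) * v p? direction fixed below
    have g1 : u (2*p) = -u 0 + β * u p := by
      have h1 : (u 0 * v p - u p * v 0) * u (2*p)
          = (u 0 * v p - u p * v 0) * (-u 0 + β * u p) := by
        linear_combination (-(u 0)) * F2 + (-(u p)) * e3
      exact mul_left_cancel₀ hW h1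
    have g2 : v (2*p) = -v 0 + β * v p := by
      have h1 : (u 0 * v p - u p * v 0) * v (2*p)
          = (u 0 * v p - u p * v 0) * (-v 0 + β * v p) := by
        linear_combination (-(v 0)) * F2 + (-(v p)) * e3
      exact mul_left_cancel₀ hW h1
    have g3 : u (-p) = β * u 0 - u p := by
      have h1 : (u 0 * v p - u p * v 0) * u (-p)
          = (u 0 * v p - u p * v 0) * (β * u 0 - u p) := by
        linear_combination (-(u 0)) * F3 + (u p) * F1 - (u 0) * e3
      exact mul_left_cancel₀ hW h1
    have g4 : v (-p) = β * v 0 - v p := by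
      have h1 : (u 0 * v p - u p * v 0) * v (-p)
          = (u 0 * v p - u p * v 0) * (β * v 0 - v p) := by
        linear_combination (-(v 0)) * F3 + (v p) * F1 - (v 0) * e3
      exact mul_left_cancel₀ hW h1
    -- complex estimates
    by_contra hcon
    push_neg at hcon
    have hA := (max_lt_iff.mp hcon).1
    have hB := (max_lt_iff.mp (max_lt_iff.mp hcon).2).1
    have hC := (max_lt_iff.mp (max_lt_iff.mp hcon).2).2
    rw [nrm_eq] at hA hB hC
    have habs0 : ‖(⟨u 0, v 0⟩ : ℂ)‖ = 1 := by
      rw [← nrm_eq, hnorm]; exact Real.sqrt_one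
    have hz0 : (⟨u 0, v 0⟩ : ℂ) = (β:ℂ) * ⟨u p, v p⟩ - ⟨u (2*p), v (2*p)⟩ := by
      apply Complex.ext
      · simp only [Complex.sub_re, Complex.mul_re, Complex.ofReal_re, Complex.ofReal_im]
        rw [g1]; ring
      · simp only [Complex.sub_im, Complex.mul_im, Complex.ofReal_re, Complex.ofReal_im]
        rw [g2]; ring
    have hzm : ((β:ℂ) * ⟨u 0, v 0⟩ : ℂ) = ⟨u (-p), v (-p)⟩ + ⟨u p, v p⟩ := by
      apply Complex.ext
      · simp only [Complex.add_re, Complex.mul_re, Complex.ofReal_re, Complex.ofReal_im]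
        rw [g3]; ring
      · simp only [Complex.add_im, Complex.mul_im, Complex.ofReal_re, Complex.ofReal_im]
        rw [g4]; ring
    have hβsmall : |β| < 1 := by
      have h1 : ‖(β:ℂ) * ⟨u 0, v 0⟩‖ = |β| := by
        rw [norm_mul, Complex.norm_real, Real.norm_eq_abs, habs0, mul_one]
      have h2 := norm_add_le (⟨u (-p), v (-p)⟩ : ℂ) (⟨u p, v p⟩ : ℂ)
      rw [← hzm, h1] at h2
      linarith
    have hfin : (1:ℝ) ≤ |β| * ‖(⟨u p, v p⟩ : ℂ)‖
        + ‖(⟨u (2*p), v (2*p)⟩ : ℂ)‖ := by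
      have h2 := norm_sub_le ((β:ℂ) * ⟨u p, v p⟩) (⟨u (2*p), v (2*p)⟩ : ℂ)
      rw [← hz0, habs0, norm_mul, Complex.norm_real, Real.norm_eq_abs] at h2
      exact h2
    nlinarith [norm_nonneg (⟨u p, v p⟩ : ℂ),
      norm_nonneg (⟨u (2*p), v (2*p)⟩ : ℂ), abs_nonneg β]


/-- For a locally bounded `p`-periodic signed measure `μ` and
a solution `(u,v)` of `-u'' + uμ = Eu` with `|u(0)|² + |v(0)|² = 1`, one has
`max{‖(u,v)(-p)‖, ‖(u,v)(p)‖, ‖(u,v)(2p)‖} ≥ 1/2` (Euclidean norm). -/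
theorem periodic_three_point_estimate (μ : SM) (hloc : μ.LocFin)
    (p : ℝ) (hp : 0 < p) (hper : μ.IsPeriodic p)
    (E : ℝ) (u v : ℝ → ℝ) (hs : IsSolution μ E u v)
    (hnorm : (u 0) ^ 2 + (v 0) ^ 2 = 1) :
    1 / 2 ≤ max (Real.sqrt ((u (-p)) ^ 2 + (v (-p)) ^ 2))
        (max (Real.sqrt ((u p) ^ 2 + (v p) ^ 2))
          (Real.sqrt ((u (2 * p)) ^ 2 + (v (2 * p)) ^ 2))) := by
  exact periodic_three_point_estimate' μ hloc p hp hper E u v hs hnorm
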